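/- Let n be a positive integer, B : ℝ^n × ℝ^n → ℝ^n a bilinear map, V₀, F ∈ ℝ^n, and define B^1(V₀) = {V₀} and B^k(V₀) = ⋃_{i=1}^{k-1} {B(x,y) : x ∈ B^i(V₀), y ∈ B^{k-i}(V₀)}. Suppose there is a bounded set X ⊆ ℝ^n whose convex hull contains V₀ and satisfies B(u,v) ∈ conv(X) for all u,v ∈ X. Then for every k ≥ 1 and every u ∈ B^k(V₀), one has |F · u| ≤ sup_{x ∈ X} |F · x|. -/

import Mathlib

open Matrix

/-- `BIter B v₀ k u` : `u` is obtainable by a fully parenthesized expression over the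
binary map `B` using exactly `k` occurrences of `v₀`. -/
inductive BIter {E : Type*} (B : E → E → E) (v₀ : E) : ℕ → E → Prop
  | base : BIter B v₀ 1 v₀
  | step {i j : ℕ} {x y : E} (hx : BIter B v₀ i x) (hy : BIter B v₀ j y) :
      BIter B v₀ (i + j) (B x y)

theorem stmt_0 (n : ℕ) (hn : 0 < n)
    (B : (Fin n → ℝ) →ₗ[ℝ] (Fin n → ℝ) →ₗ[ℝ] (Fin n → ℝ))
    (V₀ F : Fin n → ℝ) (X : Set (Fin n → ℝ))
    (hXbdd : Bornology.IsBounded X)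
    (hV₀ : V₀ ∈ convexHull ℝ X)
    (hBX : ∀ u ∈ X, ∀ v ∈ X, B u v ∈ convexHull ℝ X) :
    ∀ k : ℕ, 1 ≤ k → ∀ u : Fin n → ℝ, BIter (fun x y => B x y) V₀ k u →
      |F ⬝ᵥ u| ≤ ⨆ x ∈ X, |F ⬝ᵥ x| := by
  -- Step 1: the convex hull of X is closed under B.
  have hconv : ∀ u ∈ convexHull ℝ X, ∀ v ∈ convexHull ℝ X, B u v ∈ convexHull ℝ X := by
    have step1 : ∀ u ∈ X, ∀ v ∈ convexHull ℝ X, B u v ∈ convexHull ℝ X := by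
      intro u hu v hv
      have : convexHull ℝ X ⊆ (B u) ⁻¹' (convexHull ℝ X) := by
        apply convexHull_min
        · intro w hw
          exact hBX u hu w hw
        · exact (convex_convexHull ℝ X).linear_preimage (B u)
      exact this hv
    intro u hu v hv
    have : convexHull ℝ X ⊆ (fun w => B w v) ⁻¹' (convexHull ℝ X) := by
      apply convexHull_min
      · intro w hw
        exact step1 w hw v hv
      · exact (convex_convexHull ℝ X).linear_preimage (B.flip v)
    exact this hu
  -- Step 2: every iterate lies in the convex hull of X.
  have hmem : ∀ k : ℕ, ∀ u : Fin n → ℝ, BIter (fun x y => B x y) V₀ k u →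
      u ∈ convexHull ℝ X := by
    intro k u h
    induction h with
    | base => exact hV₀
    | step hx hy ihx ihy => exact hconv _ ihx _ ihy
  -- X is nonempty.
  have hXne : X.Nonempty := convexHull_nonempty_iff.mp ⟨V₀, hV₀⟩
  -- The function |F ⬝ᵥ ·| is bounded above on X.
  have hbdd : BddAbove ((fun x => |F ⬝ᵥ x|) '' X) := by
    have hcont : Continuous fun x : Fin n → ℝ => |F ⬝ᵥ x| := by
      have : Continuous fun x : Fin n → ℝ => ∑ i, F i * x i :=
        continuous_finset_sum _ fun i _ => continuous_const.mul (continuous_apply i)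
      simpa [dotProduct] using this.abs
    have hK : IsCompact (closure X) := hXbdd.isCompact_closure
    have : BddAbove ((fun x => |F ⬝ᵥ x|) '' closure X) :=
      (hK.image hcont).bddAbove
    exact this.mono (Set.image_mono subset_closure)
  set M : ℝ := ⨆ x ∈ X, |F ⬝ᵥ x| with hM
  haveI : Nonempty X := hXne.to_subtype
  have hbdd' : BddAbove (Set.range fun i : X => |F ⬝ᵥ (i : Fin n → ℝ)|) := by
    rw [show (Set.range fun i : X => |F ⬝ᵥ (i : Fin n → ℝ)|) =
      (fun x => |F ⬝ᵥ x|) '' X from (Set.image_eq_range _ _).symm ▸ rfl]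
    exact hbdd
  have h0 : sSup (∅ : Set ℝ) ≤ ⨆ i : X, |F ⬝ᵥ (i : Fin n → ℝ)| := by
    rw [Real.sSup_empty]
    exact le_trans (abs_nonneg _) (le_ciSup hbdd' (Classical.arbitrary X))
  have heq : M = ⨆ i : X, |F ⬝ᵥ (i : Fin n → ℝ)| := (ciSup_subtype'' hbdd' h0).symm
  have hle : ∀ x ∈ X, |F ⬝ᵥ x| ≤ M := fun x hx => heq ▸ le_ciSup_set hbdd hx
  -- The set where |F ⬝ᵥ ·| ≤ M is convex and contains X, hence contains the hull.
  have hsub : convexHull ℝ X ⊆ {z | |F ⬝ᵥ z| ≤ M} := by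
    apply convexHull_min hle
    intro z hz w hw a b ha hb hab
    have : F ⬝ᵥ (a • z + b • w) = a * (F ⬝ᵥ z) + b * (F ⬝ᵥ w) := by
      simp [dotProduct_add, dotProduct_smul, smul_eq_mul]
    calc |F ⬝ᵥ (a • z + b • w)| = |a * (F ⬝ᵥ z) + b * (F ⬝ᵥ w)| := by rw [this]
      _ ≤ a * |F ⬝ᵥ z| + b * |F ⬝ᵥ w| := by
          calc |a * (F ⬝ᵥ z) + b * (F ⬝ᵥ w)| ≤ |a * (F ⬝ᵥ z)| + |b * (F ⬝ᵥ w)| := abs_add_le _ _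
            _ = a * |F ⬝ᵥ z| + b * |F ⬝ᵥ w| := by
                rw [abs_mul, abs_mul, abs_of_nonneg ha, abs_of_nonneg hb]
      _ ≤ a * M + b * M := by
          gcongr
          exacts [hz, hw]
      _ = M := by rw [← add_mul, hab, one_mul]
  intro k hk u hu
  exact hsub (hmem k u hu)
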